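/- Let X be a finite-dimensional Noetherian topological space that is biequidimensional. Then d(x) = codim(closure{x}, X) defines a codimension function on X: whenever x' is a specialization of x with codim(closure{x'}, closure{x}) = 1, one has d(x') = d(x) + 1. -/

import Mathlib

open Order TopologicalSpace

/-- A maximal chain of irreducible closed subsets. -/
def IsMaximalChain {α : Type*} [PartialOrder α] (p : LTSeries α) : Prop :=
  IsMin p.head ∧ IsMax p.last ∧ ∀ i : Fin p.length, p.toFun i.castSucc ⋖ p.toFun i.succ

/-- The closure of a point, as an irreducible closed subset. -/
def pointClosure {X : Type*} [TopologicalSpace X] (x : X) : IrreducibleCloseds X :=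
  ⟨closure {x}, isIrreducible_singleton.closure, isClosed_closure⟩

section Aux

variable {α : Type*} [PartialOrder α]

/-- A series of covering relations. -/
abbrev CovSeries (α : Type*) [PartialOrder α] := RelSeries {(a, b) : α × α | a ⋖ b}

/-- A covering series is in particular a strictly increasing series. -/
def CovSeries.toLT (c : CovSeries α) : LTSeries α := c.ofLE fun ⟨_, _⟩ h => CovBy.lt h

@[simp] lemma CovSeries.toLT_length (c : CovSeries α) : c.toLT.length = c.length := rfl
@[simp] lemma CovSeries.toLT_head (c : CovSeries α) : c.toLT.head = c.head := rfl
@[simp] lemma CovSeries.toLT_last (c : CovSeries α) : c.toLT.last = c.last := rfl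

lemma CovSeries.isMaximalChain_toLT (c : CovSeries α) (h1 : IsMin c.head) (h2 : IsMax c.last) :
    IsMaximalChain c.toLT := ⟨h1, h2, c.step⟩

lemma head_insertNth (p : LTSeries α) (i : Fin p.length) (a : α)
    (h1 : p.toFun i.castSucc < a) (h2 : a < p.toFun i.succ) :
    (p.insertNth i a h1 h2).head = p.head := by
  simp only [RelSeries.head, RelSeries.insertNth, RelSeries.insertNth_toFun]
  change Fin.insertNth (α := fun _ => α) (Fin.castSucc i.succ) a p.toFun (0 : Fin (p.length + 1 + 1)) = p.toFun 0
  rw [Fin.insertNth_apply_below (by simp [Fin.lt_iff_val_lt_val])]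
  simp only [eq_rec_constant]
  congr 1

lemma last_insertNth (p : LTSeries α) (i : Fin p.length) (a : α)
    (h1 : p.toFun i.castSucc < a) (h2 : a < p.toFun i.succ) :
    (p.insertNth i a h1 h2).last = p.last := by
  simp only [RelSeries.last, RelSeries.insertNth, RelSeries.insertNth_toFun]
  change Fin.insertNth (α := fun _ => α) (Fin.castSucc i.succ) a p.toFun (Fin.last (p.length + 1)) =
    p.toFun (Fin.last _)
  rw [Fin.insertNth_apply_above (by simp [Fin.lt_iff_val_lt_val])]
  simp only [eq_rec_constant]
  congr 1

lemma saturate_aux {N : ℕ} (hN : ∀ p : LTSeries α, p.length ≤ N) :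
    ∀ n (p : LTSeries α), N ≤ p.length + n →
    ∃ c : CovSeries α, c.head = p.head ∧ c.last = p.last ∧ p.length ≤ c.length := by
  intro n
  induction n with
  | zero =>
    intro p hp
    by_cases hc : ∀ i : Fin p.length, p.toFun i.castSucc ⋖ p.toFun i.succ
    · exact ⟨⟨p.length, p.toFun, hc⟩, rfl, rfl, le_rfl⟩
    · push_neg at hc
      obtain ⟨i, hi⟩ := hc
      obtain ⟨z, hz1, hz2⟩ := (not_covBy_iff (p.step i)).mp hi
      have h : p.length + 1 ≤ N := hN (p.insertNth i z hz1 hz2)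
      omega
  | succ n ih =>
    intro p hp
    by_cases hc : ∀ i : Fin p.length, p.toFun i.castSucc ⋖ p.toFun i.succ
    · exact ⟨⟨p.length, p.toFun, hc⟩, rfl, rfl, le_rfl⟩
    · push_neg at hc
      obtain ⟨i, hi⟩ := hc
      obtain ⟨z, hz1, hz2⟩ := (not_covBy_iff (p.step i)).mp hi
      obtain ⟨c, h1, h2, h3⟩ := ih (p.insertNth i z hz1 hz2)
        (show N ≤ p.length + 1 + n by omega)
      refine ⟨c, ?_, ?_, ?_⟩
      · rw [h1, head_insertNth]
      · rw [h2, last_insertNth]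
      · exact le_trans (show p.length ≤ p.length + 1 by omega) h3

/-- Any strictly increasing series refines to a covering series with the same endpoints. -/
lemma saturate {N : ℕ} (hN : ∀ p : LTSeries α, p.length ≤ N) (p : LTSeries α) :
    ∃ c : CovSeries α, c.head = p.head ∧ c.last = p.last ∧ p.length ≤ c.length :=
  saturate_aux hN N p (by omega)

lemma extend_min_aux {N : ℕ} (hN : ∀ p : LTSeries α, p.length ≤ N) :
    ∀ n (c : CovSeries α), N ≤ c.length + n →
    ∃ c' : CovSeries α, IsMin c'.head ∧ c'.last = c.last ∧ c.length ≤ c'.length := by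
  intro n
  induction n with
  | zero =>
    intro c hc
    by_cases hm : IsMin c.head
    · exact ⟨c, hm, rfl, le_rfl⟩
    · exfalso
      obtain ⟨y, hy⟩ := not_isMin_iff.mp hm
      obtain ⟨c₀, hh, hl, hlen⟩ := saturate hN ((RelSeries.singleton {(a, b) : α × α | a < b} c.head).cons y hy)
      have hconn : c₀.last = c.head := by rw [hl]; rfl
      have h : c₀.length + c.length ≤ N := hN (CovSeries.toLT (c₀.smash c hconn))
      have h1 : 1 ≤ c₀.length := by
        have : ((RelSeries.singleton (α := α) {(a, b) : α × α | a < b} c.head).cons y hy).length = 1 := rfl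
        omega
      omega
  | succ n ih =>
    intro c hc
    by_cases hm : IsMin c.head
    · exact ⟨c, hm, rfl, le_rfl⟩
    · obtain ⟨y, hy⟩ := not_isMin_iff.mp hm
      obtain ⟨c₀, hh, hl, hlen⟩ := saturate hN ((RelSeries.singleton {(a, b) : α × α | a < b} c.head).cons y hy)
      have hconn : c₀.last = c.head := by rw [hl]; rfl
      have h1 : 1 ≤ c₀.length := by
        have : ((RelSeries.singleton (α := α) {(a, b) : α × α | a < b} c.head).cons y hy).length = 1 := rfl
        omega
      obtain ⟨c', hm', hl', hlen'⟩ := ih (c₀.smash c hconn) (by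
        have : (c₀.smash c hconn).length = c₀.length + c.length := rfl
        omega)
      refine ⟨c', hm', ?_, ?_⟩
      · rw [hl']; simp
      · have : (c₀.smash c hconn).length = c₀.length + c.length := rfl
        omega

/-- Any covering series extends downwards to one starting at a minimal element. -/
lemma extend_min {N : ℕ} (hN : ∀ p : LTSeries α, p.length ≤ N) (c : CovSeries α) :
    ∃ c' : CovSeries α, IsMin c'.head ∧ c'.last = c.last ∧ c.length ≤ c'.length :=
  extend_min_aux hN N c (by omega)

lemma extend_max_aux {N : ℕ} (hN : ∀ p : LTSeries α, p.length ≤ N) :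
    ∀ n (c : CovSeries α), N ≤ c.length + n →
    ∃ c' : CovSeries α, c'.head = c.head ∧ IsMax c'.last ∧ c.length ≤ c'.length := by
  intro n
  induction n with
  | zero =>
    intro c hc
    by_cases hm : IsMax c.last
    · exact ⟨c, rfl, hm, le_rfl⟩
    · exfalso
      obtain ⟨y, hy⟩ := not_isMax_iff.mp hm
      obtain ⟨c₀, hh, hl, hlen⟩ := saturate hN ((RelSeries.singleton {(a, b) : α × α | a < b} c.last).snoc y hy)
      have hconn : c.last = c₀.head := by rw [hh]; rfl
      have h : c.length + c₀.length ≤ N := hN (CovSeries.toLT (c.smash c₀ hconn))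
      have h1 : 1 ≤ c₀.length := by
        have : ((RelSeries.singleton (α := α) {(a, b) : α × α | a < b} c.last).snoc y hy).length = 1 := rfl
        omega
      omega
  | succ n ih =>
    intro c hc
    by_cases hm : IsMax c.last
    · exact ⟨c, rfl, hm, le_rfl⟩
    · obtain ⟨y, hy⟩ := not_isMax_iff.mp hm
      obtain ⟨c₀, hh, hl, hlen⟩ := saturate hN ((RelSeries.singleton {(a, b) : α × α | a < b} c.last).snoc y hy)
      have hconn : c.last = c₀.head := by rw [hh]; rfl
      have h1 : 1 ≤ c₀.length := by
        have : ((RelSeries.singleton (α := α) {(a, b) : α × α | a < b} c.last).snoc y hy).length = 1 := rfl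
        omega
      obtain ⟨c', hh', hm', hlen'⟩ := ih (c.smash c₀ hconn) (by
        have : (c.smash c₀ hconn).length = c.length + c₀.length := rfl
        omega)
      refine ⟨c', ?_, hm', ?_⟩
      · rw [hh']; simp
      · have : (c.smash c₀ hconn).length = c.length + c₀.length := rfl
        omega

/-- Any covering series extends upwards to one ending at a maximal element. -/
lemma extend_max {N : ℕ} (hN : ∀ p : LTSeries α, p.length ≤ N) (c : CovSeries α) :
    ∃ c' : CovSeries α, c'.head = c.head ∧ IsMax c'.last ∧ c.length ≤ c'.length :=
  extend_max_aux hN N c (by omega)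

/-- An `LTSeries` in `Set.Ici a` whose head is everything above a covering series head. -/
def covToIci (c : CovSeries α) (a : α) (ha : c.head = a) : LTSeries (Set.Ici a) :=
  LTSeries.mk c.length
    (fun i => ⟨c.toLT i, by
      rw [Set.mem_Ici, ← ha]
      exact c.toLT.monotone (Fin.zero_le i)⟩)
    (fun i j hij => by exact Subtype.mk_lt_mk.mpr (c.toLT.strictMono hij))

@[simp] lemma covToIci_length (c : CovSeries α) (a : α) (ha : c.head = a) :
    (covToIci c a ha).length = c.length := rfl

end Aux

/-- Let `X` be a finite-dimensional Noetherian topological space that is biequidimensional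
(all maximal chains of irreducible closed subsets have the same length).  Then
`d x = codim (closure {x}, X)` defines a codimension function on `X`: whenever `x'` is a
specialization of `x` with `codim (closure {x'}, closure {x}) = 1`, one has
`d x' = d x + 1`. -/
theorem stmt_15 (X : Type*) [TopologicalSpace X] [NoetherianSpace X]
    (hfd : topologicalKrullDim X < ⊤)
    (hbieq : ∀ p q : LTSeries (IrreducibleCloseds X),
      IsMaximalChain p → IsMaximalChain q → p.length = q.length) :
    ∀ x x' : X, x' ∈ closure {x} →
      Order.krullDim (Set.Icc (pointClosure x') (pointClosure x)) = 1 →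
      Order.krullDim (Set.Ici (pointClosure x'))
        = Order.krullDim (Set.Ici (pointClosure x)) + 1 := by
  intro x x' hx hIcc
  set A := IrreducibleCloseds X with hA
  set Y : A := pointClosure x with hY
  set Y' : A := pointClosure x' with hY'
  have hAfd : Order.krullDim A < ⊤ := hfd
  have hne : Nonempty A := ⟨Y⟩
  -- a uniform bound on lengths of chains
  obtain ⟨N, hN⟩ : ∃ N : ℕ, ∀ p : LTSeries A, p.length ≤ N := by
    have h0 : (0 : WithBot ℕ∞) ≤ Order.krullDim A := Order.krullDim_nonneg
    cases hk : Order.krullDim A with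
    | bot => rw [hk] at h0; exact absurd h0 (by simp)
    | coe e =>
      cases e with
      | top => rw [hk] at hAfd; exact absurd hAfd (by
          intro h
          exact absurd (lt_of_lt_of_le h le_top) (lt_irrefl _))
      | coe N =>
        refine ⟨N, fun p => ?_⟩
        have := LTSeries.length_le_krullDim p
        rw [hk] at this
        exact_mod_cast this
  -- `Y' ≤ Y`
  have hle : Y' ≤ Y := by
    show (closure {x'} : Set X) ⊆ closure {x}
    exact closure_minimal (Set.singleton_subset_iff.mpr hx) isClosed_closure
  -- `Y' ⋖ Y`
  have hlt : Y' < Y := by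
    rcases lt_or_eq_of_le hle with h | h
    · exact h
    · exfalso
      have hu : Unique (Set.Icc Y' Y) :=
        ⟨⟨⟨Y', le_rfl, hle⟩⟩, fun a => Subtype.ext (le_antisymm (a.2.2.trans h.ge) a.2.1)⟩
      have := @Order.krullDim_eq_zero_of_unique _ _ hu
      rw [hIcc] at this
      exact absurd this (by norm_num)
  have hcov : Y' ⋖ Y := by
    refine ⟨hlt, fun z hz1 hz2 => ?_⟩
    let p : LTSeries (Set.Icc Y' Y) :=
      ((RelSeries.singleton {(a, b) : Set.Icc Y' Y × Set.Icc Y' Y | a < b} (⟨Y, hle, le_rfl⟩ : Set.Icc Y' Y)).cons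
          (⟨z, hz1.le, hz2.le⟩ : Set.Icc Y' Y)
          (by exact (Subtype.mk_lt_mk.mpr hz2 : (⟨z, hz1.le, hz2.le⟩ : Set.Icc Y' Y) < ⟨Y, hle, le_rfl⟩))).cons
        (⟨Y', le_rfl, hle⟩ : Set.Icc Y' Y)
          (by erw [RelSeries.head_cons]; exact (Subtype.mk_lt_mk.mpr hz1 : (⟨Y', le_rfl, hle⟩ : Set.Icc Y' Y) < ⟨z, hz1.le, hz2.le⟩))
    have hp : p.length = 2 := rfl
    have := LTSeries.length_le_krullDim p
    rw [hIcc, hp] at this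
    exact absurd this (by norm_num)
  -- a covering series from a minimal element up to `Y'`, of length `k`
  obtain ⟨d, hdmin, hdl, _⟩ := extend_min hN (RelSeries.singleton _ Y')
  have hdlast : d.last = Y' := by rw [hdl]; simp
  -- a covering series from `Y` up to a maximal element, of length `t`
  obtain ⟨u, huh, humax, _⟩ := extend_max hN (RelSeries.singleton _ Y)
  have huhead : u.head = Y := by rw [huh]; simp
  set k := d.length with hk
  set t := u.length with ht
  -- the reference maximal chain, of length `k + 1 + t`
  have hcovd : d.last ⋖ Y := hdlast ▸ hcov
  set d2 : CovSeries A := d.snoc Y hcovd with hd2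
  have hd2len : d2.length = k + 1 := rfl
  have hd2head : d2.head = d.head := by simp [hd2]
  have hd2last : d2.last = Y := by simp [hd2]
  have hfull : (d2.smash u (by rw [hd2last, huhead])).length = (k + 1) + t := rfl
  -- key upper bound: for any bottom series `b` ending at `W` and chain `q` in `Ici W`
  have key : ∀ (W : A) (b : CovSeries A), IsMin b.head → b.last = W →
      ∀ q : LTSeries (Set.Ici W), b.length + q.length ≤ (k + 1) + t := by
    intro W b hbmin hblast q
    let q1 : LTSeries A := q.map Subtype.val fun _ _ h => h
    have hq1len : q1.length = q.length := rfl
    have hq1head : W ≤ q1.head := q.head.2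
    obtain ⟨q2, hq2h, hq2len⟩ : ∃ q2 : LTSeries A, q2.head = W ∧ q.length ≤ q2.length := by
      by_cases hW : W = q1.head
      · exact ⟨q1, hW.symm, le_of_eq hq1len.symm⟩
      · refine ⟨q1.cons W (lt_of_le_of_ne hq1head hW), by simp, ?_⟩
        have hcl : (q1.cons W (lt_of_le_of_ne hq1head hW)).length = q1.length + 1 := by simp
        omega
    obtain ⟨c1, hc1h, _, hc1len⟩ := saturate hN q2
    obtain ⟨c2, hc2h, hc2max, hc2len⟩ := extend_max hN c1
    have hconn : b.last = c2.head := by rw [hblast, hc2h, hc1h, hq2h]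
    have hconn2 : d2.last = u.head := by rw [hd2last, huhead]
    have hmax1 : IsMaximalChain (CovSeries.toLT (b.smash c2 hconn)) :=
      CovSeries.isMaximalChain_toLT _
        (by rwa [RelSeries.head_smash]) (by rwa [RelSeries.last_smash])
    have hmax2 : IsMaximalChain (CovSeries.toLT (d2.smash u hconn2)) :=
      CovSeries.isMaximalChain_toLT _
        (by rw [RelSeries.head_smash, hd2head]; exact hdmin)
        (by rwa [RelSeries.last_smash])
    have heq : (b.smash c2 hconn).length = (d2.smash u hconn2).length :=
      hbieq _ _ hmax1 hmax2
    have hsl : (b.smash c2 hconn).length = b.length + c2.length := rfl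
    have hsl2 : (d2.smash u hconn2).length = (k + 1) + t := rfl
    rw [hsl2, hsl] at heq
    omega
  -- upper bound for `Ici Y'` via `d`
  have hup' : ∀ q : LTSeries (Set.Ici Y'), q.length ≤ t + 1 := by
    intro q
    have := key Y' d hdmin hdlast q
    omega
  -- upper bound for `Ici Y` via `d2`
  have hup : ∀ q : LTSeries (Set.Ici Y), q.length ≤ t := by
    intro q
    have := key Y d2 (by rwa [hd2head]) hd2last q
    omega
  -- lower bound for `Ici Y`: the series `u`
  have hlow : (t : WithBot ℕ∞) ≤ Order.krullDim (Set.Ici Y) := by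
    have := LTSeries.length_le_krullDim (covToIci u Y huhead)
    simpa using this
  -- lower bound for `Ici Y'`: `Y' ⋖ Y` followed by `u`
  have hlow' : ((t + 1 : ℕ) : WithBot ℕ∞) ≤ Order.krullDim (Set.Ici Y') := by
    set s : CovSeries A := (RelSeries.singleton _ Y').snoc Y (by simpa using hcov) with hs
    have hshead : s.head = Y' := by simp [hs]
    have hslast : s.last = Y := by simp [hs]
    set s2 : CovSeries A := s.smash u (by rw [hslast, huhead]) with hs2
    have hs2head : s2.head = Y' := by rw [hs2, RelSeries.head_smash, hshead]
    have hs2len : s2.length = 1 + t := rfl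
    have := LTSeries.length_le_krullDim (covToIci s2 Y' hs2head)
    simp only [covToIci_length, hs2len] at this
    convert this using 2
    omega
  -- conclude
  have hdimY : Order.krullDim (Set.Ici Y) = (t : ℕ∞) := by
    refine le_antisymm ?_ hlow
    rw [Order.krullDim_eq_iSup_length]
    exact WithBot.coe_le_coe.mpr (iSup_le fun q => by exact_mod_cast hup q)
  have hdimY' : Order.krullDim (Set.Ici Y') = ((t + 1 : ℕ) : ℕ∞) := by
    refine le_antisymm ?_ hlow'
    rw [Order.krullDim_eq_iSup_length]
    exact WithBot.coe_le_coe.mpr (iSup_le fun q => by exact_mod_cast hup' q)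
  rw [hdimY, hdimY']
  push_cast
  rfl
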